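/- If f : (1, ∞) → ℝ is continuous and for every x > 1 the sequence f(x^n) tends to 0 as n → ∞, then f(x) → 0 as x → ∞. -/

import Mathlib

open Filter Set Metric

theorem croft_powers (f : ℝ → ℝ) (hf : ContinuousOn f (Set.Ioi (1:ℝ)))
    (h : ∀ x > (1:ℝ), Filter.Tendsto (fun n : ℕ => f (x ^ n)) Filter.atTop (nhds 0)) :
    Filter.Tendsto f Filter.atTop (nhds 0) := by
  rw [Metric.tendsto_nhds]
  intro ε hε
  -- Work in the closed (hence Baire) subspace S = [2, ∞)
  set S : Set ℝ := Set.Ici (2:ℝ) with hSdef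
  haveI : Nonempty S := ⟨⟨2, by simp [hSdef]⟩⟩
  haveI : CompleteSpace S := IsClosed.completeSpace_coe (hs := by rw [hSdef]; exact isClosed_Ici)
  set K : ℕ → Set S := fun N => {x : S | ∀ n, N + 1 ≤ n → |f ((x:ℝ) ^ n)| ≤ ε/2} with hKdef
  have hmem : ∀ (x : S) (n : ℕ), 1 ≤ n → (x:ℝ) ^ n ∈ Set.Ioi (1:ℝ) := by
    intro x n hn
    have hx : (2:ℝ) ≤ x := x.2
    have h1 : (2:ℝ) ^ n ≤ (x:ℝ) ^ n := pow_le_pow_left₀ (by norm_num) hx n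
    have h2 : (1:ℝ) < 2 ^ n := one_lt_pow₀ (by norm_num) (by omega)
    exact lt_of_lt_of_le h2 h1
  have hclosed : ∀ N, IsClosed (K N) := by
    intro N
    have hKeq : K N = ⋂ n ∈ {n : ℕ | N + 1 ≤ n}, {x : S | |f ((x:ℝ)^n)| ≤ ε/2} := by
      ext x; simp [hKdef, Set.mem_iInter]
    rw [hKeq]
    refine isClosed_biInter fun n hn => ?_
    have hg : Continuous fun x : S => (x:ℝ)^n := continuous_subtype_val.pow n
    have hcont : Continuous fun x : S => |f ((x:ℝ)^n)| :=
      (hf.comp_continuous hg (fun x => hmem x n (by simpa using Nat.one_le_iff_ne_zero.2 (by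
        simp only [Set.mem_setOf_eq] at hn; omega)))).abs
    exact isClosed_le hcont continuous_const
  have hcover : (⋃ N, K N) = Set.univ := by
    ext x
    simp only [Set.mem_iUnion, Set.mem_univ, iff_true]
    have hx1 : (1:ℝ) < x := lt_of_lt_of_le one_lt_two x.2
    have ht := h x hx1
    rw [Metric.tendsto_atTop] at ht
    obtain ⟨N, hN⟩ := ht (ε/2) (by linarith)
    refine ⟨N, fun n hn => ?_⟩
    have := hN n (by omega)
    rw [Real.dist_eq, sub_zero] at this
    exact this.le
  obtain ⟨N, x₀, hx₀⟩ := nonempty_interior_of_iUnion_of_closed hclosed hcover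
  obtain ⟨δ, hδ, hball⟩ := Metric.isOpen_iff.1 isOpen_interior x₀ hx₀
  have hball' : Metric.ball x₀ δ ⊆ K N := hball.trans interior_subset
  set u : ℝ := (x₀:ℝ) with hu
  set v : ℝ := u + δ/2 with hv
  have hu2 : (2:ℝ) ≤ u := x₀.2
  have hu1 : (1:ℝ) < u := lt_of_lt_of_le one_lt_two hu2
  have huv : u < v := by rw [hv]; linarith
  have hu0 : (0:ℝ) < u := by linarith
  -- Every y ∈ [u, v] satisfies |f (y^n)| ≤ ε/2 for n ≥ N+1
  have hkey : ∀ y : ℝ, u ≤ y → y ≤ v → ∀ n, N + 1 ≤ n → |f (y ^ n)| ≤ ε/2 := by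
    intro y hy1 hy2 n hn
    have hyS : y ∈ S := le_trans hu2 hy1
    have hdist : dist (⟨y, hyS⟩ : S) x₀ < δ := by
      rw [Subtype.dist_eq, Real.dist_eq, abs_of_nonneg (by rw [hu] at hy1; linarith)]
      rw [hv] at hy2; linarith
    exact hball' hdist n hn
  -- Choose M ≥ N+1 so that u^(n+1) ≤ v^n for all n ≥ M
  have hvu : (1:ℝ) < v / u := (one_lt_div hu0).2 huv
  have htend : Tendsto (fun n : ℕ => (v/u)^n) atTop atTop :=
    tendsto_pow_atTop_atTop_of_one_lt hvu
  obtain ⟨M₀, hM₀⟩ := (htend.eventually_ge_atTop u).exists_forall_of_atTop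
  set M : ℕ := max M₀ (N + 1) with hM
  -- Finish: for x ≥ u^M, write x = y^n with y ∈ [u,v], n ≥ N+1
  filter_upwards [eventually_ge_atTop (u ^ M)] with x hx
  have hx1 : (1:ℝ) ≤ x := le_trans (one_le_pow₀ hu1.le) hx
  obtain ⟨n, hn1, hn2⟩ := exists_nat_pow_near hx1 hu1
  have hnM : M ≤ n := by
    by_contra hcon
    push_neg at hcon
    have : u ^ M < u ^ (n+1) := lt_of_le_of_lt hx hn2
    have := (pow_lt_pow_iff_right₀ hu1).1 this
    omega
  have hnN : N + 1 ≤ n := le_trans (le_max_right _ _) hnM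
  have hn0 : n ≠ 0 := by omega
  have hun : (0:ℝ) < u ^ n := pow_pos hu0 n
  -- x ≤ v^n
  have hxv : x ≤ v ^ n := by
    have h1 : u ≤ (v/u)^n := hM₀ n (le_trans (le_max_left _ _) hnM)
    have h2 : u * u^n ≤ (v/u)^n * u^n := by
      exact mul_le_mul_of_nonneg_right h1 hun.le
    have h3 : (v/u)^n * u^n = v^n := by
      rw [div_pow, div_mul_cancel₀]
      exact ne_of_gt hun
    have : u ^ (n+1) ≤ v ^ n := by
      rw [pow_succ, mul_comm]; rw [h3] at h2; exact h2
    linarith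
  -- define y = x^(1/n)
  set y : ℝ := x ^ ((n:ℝ)⁻¹) with hy
  have hx0 : (0:ℝ) ≤ x := by linarith
  have hyn : y ^ n = x := Real.rpow_inv_natCast_pow hx0 hn0
  have hyu : u ≤ y := by
    have := Real.rpow_le_rpow (le_of_lt hun) hn1 (by positivity : (0:ℝ) ≤ (n:ℝ)⁻¹)
    rwa [Real.pow_rpow_inv_natCast hu0.le hn0] at this
  have hyv : y ≤ v := by
    have := Real.rpow_le_rpow hx0 hxv (by positivity : (0:ℝ) ≤ (n:ℝ)⁻¹)
    rwa [Real.pow_rpow_inv_natCast (by linarith : (0:ℝ) ≤ v) hn0] at this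
  have := hkey y hyu hyv n hnN
  rw [hyn] at this
  rw [Real.dist_eq, sub_zero]
  linarith
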